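/- (Lemma 1(ii)) Suppose v is a subgradient of h at z and Bz + b + Cy + v = 0 (i.e., z is a triangle-proximal point of y). Then for every x ∈ ℝⁿ, f(z) − f(x) ≤ ⟨x − z, C(y − z)⟩ − (1/2)⟨x − z, A(x − z)⟩. -/

import Mathlib

open scoped RealInnerProductSpace
open Matrix Filter

noncomputable section

/-- Euclidean space ℝⁿ. -/
abbrev E (n : ℕ) := EuclideanSpace ℝ (Fin n)

/-- Matrix-vector multiplication, valued in Euclidean space. -/
def mulVecE {n : ℕ} (M : Matrix (Fin n) (Fin n) ℝ) (x : E n) : E n :=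
  (WithLp.equiv 2 (Fin n → ℝ)).symm (M.mulVec ((WithLp.equiv 2 (Fin n → ℝ)) x))

/-- Operator (spectral) norm of a matrix. -/
def opNorm {n : ℕ} (M : Matrix (Fin n) (Fin n) ℝ) : ℝ :=
  ‖Matrix.toEuclideanCLM (𝕜 := ℝ) M‖

/-- The diagonal part `D` of `A`. -/
def Dmat {n : ℕ} (A : Matrix (Fin n) (Fin n) ℝ) : Matrix (Fin n) (Fin n) ℝ :=
  Matrix.diagonal fun i => A i i

/-- The strictly lower triangular part `L` of `A`. -/
def Lmat {n : ℕ} (A : Matrix (Fin n) (Fin n) ℝ) : Matrix (Fin n) (Fin n) ℝ :=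
  Matrix.of fun i j => if (j : ℕ) < (i : ℕ) then A i j else 0

/-- `B = L + (1/ω)(D + θI)`. -/
def Bmat {n : ℕ} (ω θ : ℝ) (A : Matrix (Fin n) (Fin n) ℝ) : Matrix (Fin n) (Fin n) ℝ :=
  Lmat A + ω⁻¹ • (Dmat A + θ • (1 : Matrix (Fin n) (Fin n) ℝ))

/-- `C = Lᵀ + (1/ω)((ω−1)D − θI)`. -/
def Cmat {n : ℕ} (ω θ : ℝ) (A : Matrix (Fin n) (Fin n) ℝ) : Matrix (Fin n) (Fin n) ℝ :=
  (Lmat A)ᵀ + ω⁻¹ • ((ω - 1) • Dmat A - θ • (1 : Matrix (Fin n) (Fin n) ℝ))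

/-- `v` is a subgradient of `h` at `z`. -/
def IsSubgradient {n : ℕ} (h : E n → ℝ) (v z : E n) : Prop :=
  ∀ y, h z + ⟪v, y - z⟫ ≤ h y

/-- The composite objective `f(x) = (1/2)⟨x, Ax⟩ + ⟨b, x⟩ + h(x)`. -/
def fObj {n : ℕ} (A : Matrix (Fin n) (Fin n) ℝ) (b : E n) (h : E n → ℝ) (x : E n) : ℝ :=
  (1/2) * ⟪x, mulVecE A x⟫ + ⟪b, x⟫ + h x

/-- `z` is a triangle-proximal point of `x`: there is a subgradient `v` of `h` at `z`
with `Bz + b + Cx + v = 0`. -/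
def IsTriangleProx {n : ℕ} (ω θ : ℝ) (A : Matrix (Fin n) (Fin n) ℝ) (b : E n)
    (h : E n → ℝ) (x z : E n) : Prop :=
  ∃ v, IsSubgradient h v z ∧
    mulVecE (Bmat ω θ A) z + b + mulVecE (Cmat ω θ A) x + v = 0

section AuxLemmas
open Matrix

lemma inner_eq_dot {n : ℕ} (u w : E n) :
    ⟪u, w⟫ = (WithLp.equiv 2 (Fin n → ℝ)) u ⬝ᵥ (WithLp.equiv 2 (Fin n → ℝ)) w := by
  simp [PiLp.inner_apply, RCLike.inner_apply, dotProduct, mul_comm]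

lemma dot_symm {n : ℕ} {A : Matrix (Fin n) (Fin n) ℝ} (hA : A.IsSymm) (u w : Fin n → ℝ) :
    u ⬝ᵥ A.mulVec w = w ⬝ᵥ A.mulVec u := by
  rw [Matrix.dotProduct_mulVec, ← Matrix.mulVec_transpose, hA.eq, dotProduct_comm]

lemma BC_sum {n : ℕ} (ω θ : ℝ) (hω : ω ≠ 0) (A : Matrix (Fin n) (Fin n) ℝ) (hA : A.IsSymm) :
    Bmat ω θ A + Cmat ω θ A = A := by
  ext i j
  simp only [Bmat, Cmat, Lmat, Dmat, Matrix.add_apply, Matrix.smul_apply, Matrix.sub_apply,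
    Matrix.transpose_apply, Matrix.one_apply, Matrix.diagonal_apply, Matrix.of_apply,
    smul_eq_mul]
  rcases lt_trichotomy (i : ℕ) (j : ℕ) with hij | hij | hij
  · have h1 : ¬ (j : ℕ) < (i : ℕ) := by omega
    have h2 : i ≠ j := by intro h; omega
    have h3 : A j i = A i j := by rw [← hA.apply]
    simp [hij, h1, h2, h3]
  · have h2 : i = j := Fin.ext hij
    subst h2
    simp only [lt_irrefl, if_false, if_pos rfl]
    field_simp
    ring
    simp
  · have h1 : ¬ (i : ℕ) < (j : ℕ) := by omega
    have h2 : i ≠ j := by intro h; omega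
    simp [hij, h1, h2]

lemma key_identity {n : ℕ} (A C : Matrix (Fin n) (Fin n) ℝ) (hA : A.IsSymm)
    (b x y z : Fin n → ℝ) :
    ((A - C).mulVec z + b + C.mulVec y) ⬝ᵥ (x - z)
      + ((1/2) * (z ⬝ᵥ A.mulVec z) + b ⬝ᵥ z) - ((1/2) * (x ⬝ᵥ A.mulVec x) + b ⬝ᵥ x)
    = (x - z) ⬝ᵥ C.mulVec (y - z) - (1/2) * ((x - z) ⬝ᵥ A.mulVec (x - z)) := by
  have c : ∀ (M : Matrix (Fin n) (Fin n) ℝ) (u w : Fin n → ℝ),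
      M.mulVec u ⬝ᵥ w = w ⬝ᵥ M.mulVec u := fun M u w => dotProduct_comm _ _
  have sym := dot_symm hA z x
  simp only [Matrix.sub_mulVec, Matrix.mulVec_sub, dotProduct_sub,
    sub_dotProduct, dotProduct_add, add_dotProduct]
  linear_combination c A z x - c A z z - c C z x + c C z z + c C y x - c C y z
    - (1/2) * sym

end AuxLemmas

/-- Lemma 1(ii). -/
theorem triangle_prox_descent_inequality {n : ℕ} (hn : 0 < n)
    (A : Matrix (Fin n) (Fin n) ℝ) (hA : A.IsSymm) (b : E n) (h : E n → ℝ)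
    (ω θ : ℝ) (hω : ω ∈ Set.Ioo (0 : ℝ) 2) (hθ : 0 ≤ θ)
    (y z v : E n) (hv : IsSubgradient h v z)
    (heq : mulVecE (Bmat ω θ A) z + b + mulVecE (Cmat ω θ A) y + v = 0) :
    ∀ x : E n,
      fObj A b h z - fObj A b h x
        ≤ ⟪x - z, mulVecE (Cmat ω θ A) (y - z)⟫
          - (1 / 2) * ⟪x - z, mulVecE A (x - z)⟫ := by
  intro x
  have hω0 : ω ≠ 0 := ne_of_gt hω.1
  have hB : Bmat ω θ A = A - Cmat ω θ A := eq_sub_of_add_eq (BC_sum ω θ hω0 A hA)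
  have hvx := hv x
  have hveq : v = -(mulVecE (Bmat ω θ A) z + b + mulVecE (Cmat ω θ A) y) :=
    eq_neg_of_add_eq_zero_right heq
  rw [hveq, inner_neg_left] at hvx
  have hkey : ⟪mulVecE (Bmat ω θ A) z + b + mulVecE (Cmat ω θ A) y, x - z⟫
      + ((1/2) * ⟪z, mulVecE A z⟫ + ⟪b, z⟫) - ((1/2) * ⟪x, mulVecE A x⟫ + ⟪b, x⟫)
      = ⟪x - z, mulVecE (Cmat ω θ A) (y - z)⟫ - (1/2) * ⟪x - z, mulVecE A (x - z)⟫ := by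
    rw [hB]
    simp only [inner_eq_dot, mulVecE, Equiv.apply_symm_apply, WithLp.ofLp_sub,
      WithLp.ofLp_add, WithLp.equiv_apply, WithLp.equiv_symm_apply, WithLp.ofLp_toLp]
    exact key_identity A (Cmat ω θ A) hA _ _ _ _
  simp only [fObj]
  linarith [hvx, hkey]
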